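/- Let V be a Hermitian space with complex structure J, let z ∈ V be nonzero, and let θ be uniform on [0, 2π]. Then the Vitale zonoid of X_z := π e^{θJ} z equals the closed centered disc D_z of radius ‖z‖ in the real 2-plane ℂz, and ℓ(D_z) = π‖z‖. -/

import Mathlib

open MeasureTheory

/-- Support function on a complex inner ℂ product space, via the real part of the Hermitian
inner ℂ product: `h_{K(X)}(v) = ½ E|Re⟨v, X⟩|`. -/
noncomputable def suppFnC {Ω : Type*} [MeasurableSpace Ω] (μ : Measure Ω)
    {V : Type*} [NormedAddCommGroup V] [InnerProductSpace ℂ V]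
    (X : Ω → V) (v : V) : ℝ :=
  (1 / 2) * ∫ ω, |(inner ℂ v (X ω) : ℂ).re| ∂μ

/-- The Vitale zonoid of a random vector in a complex inner ℂ product space, viewed as a
convex body of the underlying real space. -/
noncomputable def vitaleZonoidC {Ω : Type*} [MeasurableSpace Ω] (μ : Measure Ω)
    {V : Type*} [NormedAddCommGroup V] [InnerProductSpace ℂ V]
    (X : Ω → V) : Set V :=
  {x | ∀ v : V, (inner ℂ x v : ℂ).re ≤ suppFnC μ X v}

lemma abscos_per : Function.Periodic (fun t : ℝ => |Real.cos t|) (2*Real.pi) := by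
  intro t; simp [Real.cos_add_two_pi]

lemma sin_3pi2 : Real.sin (3*Real.pi/2) = -1 := by
  have h : (3*Real.pi/2 : ℝ) = Real.pi + Real.pi/2 := by ring
  rw [h, Real.sin_add]; simp

lemma int_abscos : ∫ t in (0:ℝ)..(2*Real.pi), |Real.cos t| = 4 := by
  have h1 : ∫ t in (0:ℝ)..(Real.pi/2), |Real.cos t| = 1 := by
    rw [intervalIntegral.integral_congr (g := Real.cos)]
    · simp [integral_cos]
    · intro x hx
      rw [Set.uIcc_of_le (by positivity)] at hx
      exact abs_of_nonneg (Real.cos_nonneg_of_mem_Icc ⟨by linarith [hx.1, Real.pi_pos], hx.2⟩)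
  have h2 : ∫ t in (Real.pi/2)..(3*Real.pi/2), |Real.cos t| = 2 := by
    rw [intervalIntegral.integral_congr (g := fun t => -Real.cos t)]
    · rw [intervalIntegral.integral_neg, integral_cos, sin_3pi2, Real.sin_pi_div_two]; ring
    · intro x hx
      rw [Set.uIcc_of_le (by linarith [Real.pi_pos])] at hx
      show |Real.cos x| = -Real.cos x
      rw [abs_of_nonpos]
      exact Real.cos_nonpos_of_pi_div_two_le_of_le hx.1 (by linarith [hx.2, Real.pi_pos])
  have h3 : ∫ t in (3*Real.pi/2)..(2*Real.pi), |Real.cos t| = 1 := by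
    rw [intervalIntegral.integral_congr (g := Real.cos)]
    · rw [integral_cos, sin_3pi2, Real.sin_two_pi]; ring
    · intro x hx
      rw [Set.uIcc_of_le (by linarith [Real.pi_pos])] at hx
      apply abs_of_nonneg
      have := Real.cos_nonneg_of_mem_Icc (x := x - 2*Real.pi)
        ⟨by linarith [hx.1], by linarith [hx.2, Real.pi_pos]⟩
      rwa [Real.cos_sub_two_pi] at this
  have hc : Continuous fun t : ℝ => |Real.cos t| := Real.continuous_cos.abs
  rw [← intervalIntegral.integral_add_adjacent_intervals (a := 0) (b := Real.pi/2) (c := 2*Real.pi)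
      (hc.intervalIntegrable _ _) (hc.intervalIntegrable _ _),
    ← intervalIntegral.integral_add_adjacent_intervals (a := Real.pi/2) (b := 3*Real.pi/2)
      (c := 2*Real.pi) (hc.intervalIntegrable _ _) (hc.intervalIntegrable _ _), h1, h2, h3]
  norm_num

lemma int_abscos_shift (φ : ℝ) : ∫ t in (0:ℝ)..(2*Real.pi), |Real.cos (t + φ)| = 4 := by
  have := intervalIntegral.integral_comp_add_right (a := 0) (b := 2*Real.pi)
    (fun t => |Real.cos t|) φ
  rw [this, zero_add, show 2*Real.pi + φ = φ + 2*Real.pi by ring,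
    abscos_per.intervalIntegral_add_eq φ 0, zero_add]
  exact int_abscos

lemma int_map {Ω : Type*} [MeasurableSpace Ω] (μ : Measure Ω)
    (θ : Ω → ℝ) (hθm : Measurable θ)
    (hθ : Measure.map θ μ
      = (ENNReal.ofReal (2 * Real.pi))⁻¹ • volume.restrict (Set.Icc 0 (2 * Real.pi)))
    (f : ℝ → ℝ) (hf : Continuous f) :
    ∫ ω, f (θ ω) ∂μ = (2*Real.pi)⁻¹ * ∫ t in (0:ℝ)..(2*Real.pi), f t := by
  have h2pi : (0:ℝ) < 2*Real.pi := by positivity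
  rw [← integral_map hθm.aemeasurable hf.aestronglyMeasurable, hθ,
    integral_smul_measure, ENNReal.toReal_inv, ENNReal.toReal_ofReal h2pi.le,
    integral_Icc_eq_integral_Ioc, ← intervalIntegral.integral_of_le h2pi.le, smul_eq_mul]

lemma re_abs (a : ℝ) (α : ℂ) :
    |((((Real.pi * Real.cos a : ℝ) : ℂ) + ((Real.pi * Real.sin a : ℝ):ℂ) * Complex.I) * α).re|
      = Real.pi * ‖α‖ * |Real.cos (a + Complex.arg α)| := by
  have h := Complex.norm_mul_cos_add_sin_mul_I α
  have hre : ‖α‖ * Real.cos (Complex.arg α) = α.re := by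
    conv_rhs => rw [← h]
    simp [Complex.cos_ofReal_re]
  have him : ‖α‖ * Real.sin (Complex.arg α) = α.im := by
    conv_rhs => rw [← h]
    simp [Complex.sin_ofReal_re]
  have hr : ((((Real.pi * Real.cos a : ℝ) : ℂ) + ((Real.pi * Real.sin a : ℝ):ℂ) * Complex.I) * α).re
      = Real.pi * Real.cos a * α.re - Real.pi * Real.sin a * α.im := by
    simp [add_mul, Complex.mul_re, Complex.cos_ofReal_re, Complex.sin_ofReal_re]; ring
  rw [hr, ← hre, ← him, show
    Real.pi * Real.cos a * (‖α‖ * Real.cos (Complex.arg α))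
      - Real.pi * Real.sin a * (‖α‖ * Real.sin (Complex.arg α))
      = (Real.pi * ‖α‖) * (Real.cos a * Real.cos (Complex.arg α)
        - Real.sin a * Real.sin (Complex.arg α)) by ring, abs_mul,
    abs_of_nonneg (by positivity : (0:ℝ) ≤ Real.pi * ‖α‖), Real.cos_add]


section helpers
variable {V : Type*} [NormedAddCommGroup V] [InnerProductSpace ℂ V]

lemma smul_decomp (a b : ℝ) (z : V) :
    ((a:ℂ) + (b:ℂ) * Complex.I) • z = a • z + b • (Complex.I • z) := by
  rw [add_smul, mul_smul, Complex.coe_smul, Complex.coe_smul]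

lemma inner_self_c (z : V) : (inner ℂ z z : ℂ) = ((‖z‖^2 : ℝ) : ℂ) := by
  rw [inner_self_eq_norm_sq_to_K]; push_cast; rfl

lemma helper1 (c : ℂ) (z : V) :
    (inner ℂ (c • z) (c • z) : ℂ).re = ‖c‖^2 * ‖z‖^2 := by
  rw [inner_smul_left, inner_smul_right, ← mul_assoc, Complex.conj_mul', inner_self_c,
    ← Complex.ofReal_pow, ← Complex.ofReal_mul, Complex.ofReal_re]

lemma helper2 (c : ℂ) (z : V) :
    ‖(inner ℂ (c • z) z : ℂ)‖ = ‖c‖ * ‖z‖^2 := by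
  rw [inner_smul_left, inner_self_c, norm_mul, Complex.norm_conj, Complex.norm_real, Real.norm_eq_abs,
    abs_of_nonneg (by positivity)]

lemma helper4 (w : V) : (inner ℂ w w : ℂ).re = ‖w‖^2 := by
  rw [inner_self_c, Complex.ofReal_re]

lemma helper3 {c : ℂ} (hc : ‖c‖ ≤ 1) (z v : V) :
    (inner ℂ (c • z) v : ℂ).re ≤ ‖(inner ℂ v z : ℂ)‖ := by
  rw [inner_smul_left]
  calc ((starRingEnd ℂ) c * (inner ℂ z v : ℂ)).re
      ≤ ‖((starRingEnd ℂ) c * (inner ℂ z v : ℂ))‖ := Complex.re_le_norm _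
    _ = ‖c‖ * ‖(inner ℂ z v : ℂ)‖ := by rw [norm_mul, Complex.norm_conj]
    _ ≤ 1 * ‖(inner ℂ z v : ℂ)‖ :=
        mul_le_mul_of_nonneg_right hc (norm_nonneg _)
    _ = ‖(inner ℂ v z : ℂ)‖ := by
        rw [one_mul, ← inner_conj_symm v z, Complex.norm_conj]

end helpers

set_option maxHeartbeats 1000000 in
/-- For `z ≠ 0` and `θ` uniform on `[0,2π]`, the zonoid of `X_z = π e^{θJ} z`
(`e^{θJ} = cos θ·Id + sin θ·J`, `J` = multiplication by `i`) is the closed centered disc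
`D_z` of radius `‖z‖` in the complex line `ℂz`, and `ℓ(D_z) = E‖X_z‖ = π‖z‖`. -/
theorem stmt18 {Ω : Type*} [MeasurableSpace Ω] (μ : Measure Ω) [IsProbabilityMeasure μ]
    {V : Type*} [NormedAddCommGroup V] [InnerProductSpace ℂ V] [FiniteDimensional ℂ V]
    (z : V) (hz : z ≠ 0)
    (θ : Ω → ℝ) (hθm : Measurable θ)
    (hθ : Measure.map θ μ
      = (ENNReal.ofReal (2 * Real.pi))⁻¹ • volume.restrict (Set.Icc 0 (2 * Real.pi))) :
    vitaleZonoidC μ (fun ω =>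
        (Real.pi * Real.cos (θ ω)) • z + (Real.pi * Real.sin (θ ω)) • (Complex.I • z))
      = (fun c : ℂ => c • z) '' Metric.closedBall (0 : ℂ) 1
    ∧ (∫ ω, ‖(Real.pi * Real.cos (θ ω)) • z
          + (Real.pi * Real.sin (θ ω)) • (Complex.I • z)‖ ∂μ) = Real.pi * ‖z‖ := by
  set X : Ω → V := fun ω =>
    (Real.pi * Real.cos (θ ω)) • z + (Real.pi * Real.sin (θ ω)) • (Complex.I • z) with hX
  -- rewrite X ω as a complex scalar multiple of z
  have hXc : ∀ ω, X ω = (((Real.pi * Real.cos (θ ω) : ℝ) : ℂ)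
      + ((Real.pi * Real.sin (θ ω) : ℝ) : ℂ) * Complex.I) • z := by
    intro ω
    rw [hX, smul_decomp]
  have hzpos : (0:ℝ) < ‖z‖ := norm_pos_iff.mpr hz
  -- inner ℂ products
  have hinner : ∀ (v : V) ω, (inner ℂ v (X ω) : ℂ)
      = (((Real.pi * Real.cos (θ ω) : ℝ) : ℂ)
        + ((Real.pi * Real.sin (θ ω) : ℝ) : ℂ) * Complex.I) * (inner ℂ v z : ℂ) := by
    intro v ω
    rw [hXc ω, inner_smul_right]
  -- support function computation
  have hsupp : ∀ v : V, suppFnC μ X v = ‖(inner ℂ v z : ℂ)‖ := by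
    intro v
    set α : ℂ := (inner ℂ v z : ℂ) with hα
    have hpt : ∀ ω, |(inner ℂ v (X ω) : ℂ).re|
        = Real.pi * ‖α‖ * |Real.cos (θ ω + Complex.arg α)| := by
      intro ω
      rw [hinner v ω, re_abs]
    unfold suppFnC
    rw [show (fun ω => |(inner ℂ v (X ω) : ℂ).re|)
        = fun ω => Real.pi * ‖α‖ * |Real.cos (θ ω + Complex.arg α)| from
        funext hpt]
    rw [integral_const_mul,
      int_map μ θ hθm hθ (fun t => |Real.cos (t + Complex.arg α)|)
        (by continuity), int_abscos_shift]
    have hπ := Real.pi_pos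
    field_simp
    ring
  constructor
  · -- set equality
    ext x
    constructor
    · intro hx
      have hx' : ∀ v : V, (inner ℂ x v : ℂ).re ≤ ‖(inner ℂ v z : ℂ)‖ := by
        intro v; rw [← hsupp v]; exact hx v
      set c : ℂ := (inner ℂ z x : ℂ) / ((‖z‖^2 : ℝ) : ℂ) with hc
      set w : V := x - c • z with hw
      have hznz : (((‖z‖^2 : ℝ) : ℂ)) ≠ 0 :=
        Complex.ofReal_ne_zero.mpr (by positivity)
      have hzw : (inner ℂ z w : ℂ) = 0 := by
        rw [hw, inner_sub_right, inner_smul_right, inner_self_c, hc,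
          div_mul_cancel₀ _ hznz, sub_self]
      have hwz : (inner ℂ w z : ℂ) = 0 := by
        rw [← inner_conj_symm, hzw, map_zero]
      have hxw : x = w + c • z := by rw [hw]; abel
      have hiw : (inner ℂ x w : ℂ) = inner ℂ w w := by
        rw [hxw, inner_add_left, inner_smul_left, hzw, mul_zero, add_zero]
      have h1 := hx' w
      rw [hiw, hwz] at h1
      simp only [norm_zero] at h1
      rw [helper4] at h1
      have hw0 : w = 0 := by
        have : ‖w‖ = 0 := by nlinarith [norm_nonneg w]
        exact norm_eq_zero.mp this
      have hxcz : x = c • z := by rw [hxw, hw0, zero_add]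
      -- bound |c| ≤ 1
      have h2 := hx' (c • z)
      rw [hxcz] at h2
      rw [helper1, helper2] at h2
      have habs : ‖c‖ ≤ 1 := by
        have h3 : ‖c‖^2 ≤ ‖c‖ :=
          (mul_le_mul_iff_of_pos_right (by positivity : (0:ℝ) < ‖z‖^2)).mp h2
        nlinarith [sq_nonneg (‖c‖ - 1)]
      exact ⟨c, by simpa [Complex.dist_eq] using habs, hxcz.symm⟩
    · rintro ⟨c, hcball, rfl⟩
      have habs : ‖c‖ ≤ 1 := by simpa [Complex.dist_eq] using hcball
      intro v
      rw [hsupp v]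
      exact helper3 habs z v
  · -- integral of the norm
    have hnorm : ∀ ω, ‖X ω‖ = Real.pi * ‖z‖ := by
      intro ω
      rw [hXc ω, norm_smul]
      congr 1
      have : (((Real.pi * Real.cos (θ ω) : ℝ) : ℂ)
          + ((Real.pi * Real.sin (θ ω) : ℝ) : ℂ) * Complex.I)
          = (Real.pi : ℂ) * Complex.exp ((θ ω : ℝ) * Complex.I) := by
        rw [Complex.exp_mul_I]
        push_cast [← Complex.ofReal_cos, ← Complex.ofReal_sin]
        ring
      rw [this, norm_mul, Complex.norm_exp_ofReal_mul_I, mul_one,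
        Complex.norm_real, Real.norm_eq_abs, abs_of_pos Real.pi_pos]
    rw [show (fun ω => ‖X ω‖) = fun _ => Real.pi * ‖z‖ from funext hnorm]
    simp [measure_univ]
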